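/- The maximum of uB(T) over all trees T of order n is (1/2)n³ + o(n³); that is, lim_{n→∞} max{uB(T) : T tree of order n} / n³ = 1/2. -/

import Mathlib

open Filter

/-- `nclose G u v` is the number of vertices `w` that are closer to `u` than to `v`. -/
noncomputable def nclose {V : Type*} [Fintype V] (G : SimpleGraph V) (u v : V) : ℕ :=
  Nat.card {w : V | G.dist u w < G.dist v w}

/-- The distance-unbalancedness: sum of `|n_G(u,v) - n_G(v,u)|` over unordered pairs. -/
noncomputable def uB {n : ℕ} (G : SimpleGraph (Fin n)) : ℕ :=
  ∑ u : Fin n, ∑ v ∈ Finset.Ioi u, ((nclose G u v : ℤ) - (nclose G v u : ℤ)).natAbs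

namespace UBproof

open Finset

/-! ### Arithmetic of the subdivided star encoding -/

def par (k m : ℕ) : ℕ := if m ≤ k then 0 else m - k
def dep (k m : ℕ) : ℕ := if m = 0 then 0 else (m-1)/k + 1
def br (k m : ℕ) : ℕ := (m-1) % k
def sameBr (k u v : ℕ) : Prop := u = 0 ∨ v = 0 ∨ br k u = br k v

instance (k u v : ℕ) : Decidable (sameBr k u v) := by unfold sameBr; infer_instance

def D (k u v : ℕ) : ℕ :=
  if sameBr k u v then Nat.dist (dep k u) (dep k v) else dep k u + dep k v

lemma sameBr_comm {k u v : ℕ} : sameBr k u v ↔ sameBr k v u := by unfold sameBr; tauto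

lemma D_self {k : ℕ} (u : ℕ) : D k u u = 0 := by
  unfold D sameBr
  by_cases h : u = 0 <;> simp [h, Nat.dist_self]

lemma dep_zero {k : ℕ} : dep k 0 = 0 := rfl

lemma dep_lt' {k m : ℕ} (hm : m ≠ 0) : dep k m = (m-1)/k + 1 := by
  unfold dep; rw [if_neg hm]

lemma br_lt {k m : ℕ} (hk : 1 ≤ k) : br k m < k := Nat.mod_lt _ (by omega)

lemma dep_pos {k : ℕ} {m : ℕ} (hm : m ≠ 0) : 1 ≤ dep k m := by
  unfold dep; rw [if_neg hm]; exact Nat.succ_le_succ (Nat.zero_le _)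

lemma sameBr_zero {k : ℕ} (u : ℕ) : sameBr k u 0 := Or.inr (Or.inl rfl)

lemma D_zero {k : ℕ} (u : ℕ) : D k u 0 = dep k u := by
  unfold D; rw [if_pos (sameBr_zero u)]; simp [dep_zero, Nat.dist]

lemma D_of_not_sameBr {k u v : ℕ} (h : ¬ sameBr k u v) : D k u v = dep k u + dep k v := by
  unfold D; rw [if_neg h]

variable {k : ℕ} (hk : 1 ≤ k)
include hk

lemma par_lt {m : ℕ} (hm : m ≠ 0) : par k m < m := by
  unfold par; split <;> omega

lemma dep_par {m : ℕ} (hm : m ≠ 0) : dep k (par k m) + 1 = dep k m := by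
  unfold par dep
  by_cases h : m ≤ k
  · rw [if_pos h, if_pos rfl, if_neg hm]
    have : (m-1)/k = 0 := Nat.div_eq_of_lt (by omega)
    omega
  · rw [if_neg h, if_neg (by omega : ¬ m - k = 0), if_neg hm]
    have h2 : m - 1 = (m - k - 1) + k := by omega
    rw [h2, Nat.add_div_right _ (by omega)]

lemma br_par {m : ℕ} (hm : k < m) : br k (par k m) = br k m := by
  unfold par br
  rw [if_neg (by omega)]
  have h2 : m - 1 = (m - k - 1) + k := by omega
  rw [h2, Nat.add_mod_right]

omit hk

lemma par_nz {m : ℕ} (hm : k < m) : par k m ≠ 0 := by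
  unfold par; rw [if_neg (by omega)]; omega

lemma par_eq_zero {m : ℕ} (hm : m ≤ k) : par k m = 0 := by
  unfold par; rw [if_pos hm]

lemma eq_of_br_dep {u v : ℕ} (hu : u ≠ 0) (hv : v ≠ 0) (hb : br k u = br k v)
    (hd : dep k u = dep k v) : u = v := by
  unfold br at hb
  unfold dep at hd
  rw [if_neg hu, if_neg hv] at hd
  have hq : (u-1)/k = (v-1)/k := by omega
  have h1 := Nat.div_add_mod (u-1) k
  have h2 := Nat.div_add_mod (v-1) k
  have h4 : k * ((u-1)/k) = k * ((v-1)/k) := by rw [hq]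
  omega

include hk

/-- moving along an edge changes `D` by at most 1 -/
lemma D_step (u m : ℕ) (hm : m ≠ 0) :
    D k u m ≤ D k u (par k m) + 1 ∧ D k u (par k m) ≤ D k u m + 1 := by
  have hdp := dep_par hk hm
  by_cases hmk : m ≤ k
  · rw [par_eq_zero hmk, D_zero]
    have hdm : dep k m = 1 := by
      rw [par_eq_zero hmk] at hdp; rw [← hdp, dep_zero]
    unfold D
    by_cases h : sameBr k u m
    · rw [if_pos h, hdm]; simp only [Nat.dist]; omega
    · rw [if_neg h, hdm]; omega
  · push_neg at hmk
    have hb := br_par hk hmk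
    have hnz : par k m ≠ 0 := par_nz hmk
    have hsb : sameBr k u m ↔ sameBr k u (par k m) := by
      unfold sameBr; rw [hb]; tauto
    unfold D
    by_cases h : sameBr k u m
    · rw [if_pos h, if_pos (hsb.mp h)]; simp only [Nat.dist]; omega
    · rw [if_neg h, if_neg (fun h' => h (hsb.mpr h'))]; omega

omit hk

/-! ### The subdivided star graph -/

def starG (n k : ℕ) : SimpleGraph (Fin n) :=
  SimpleGraph.fromRel (fun u v => u.val ≠ 0 ∧ v.val = par k u.val)

variable {n : ℕ}

lemma starG_adj {u v : Fin n} : (starG n k).Adj u v ↔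
    u ≠ v ∧ ((u.val ≠ 0 ∧ v.val = par k u.val) ∨ (v.val ≠ 0 ∧ u.val = par k v.val)) := by
  simp [starG, SimpleGraph.fromRel_adj]

include hk

lemma adj_par {m : Fin n} (hm : m.val ≠ 0) :
    (starG n k).Adj m ⟨par k m.val, lt_trans (par_lt hk hm) m.isLt⟩ := by
  rw [starG_adj]
  refine ⟨?_, Or.inl ⟨hm, rfl⟩⟩
  intro h
  have h2 := congrArg Fin.val h
  have := par_lt hk hm
  simp only at h2
  omega

lemma exists_walk_zero (hn : 0 < n) :
    ∀ (a : ℕ) (m : Fin n), m.val = a →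
      ∃ w : (starG n k).Walk m ⟨0, hn⟩, w.length = dep k m.val := by
  intro a
  induction a using Nat.strong_induction_on with
  | _ a ih =>
    intro m hma
    by_cases h0 : m.val = 0
    · have hm0 : m = ⟨0, hn⟩ := Fin.ext h0
      subst hm0
      exact ⟨SimpleGraph.Walk.nil, by simp [dep_zero]⟩
    · obtain ⟨w, hw⟩ := ih (par k m.val) (hma ▸ par_lt hk h0)
        ⟨par k m.val, lt_trans (par_lt hk h0) m.isLt⟩ rfl
      refine ⟨SimpleGraph.Walk.cons (adj_par hk h0) w, ?_⟩
      simp only [SimpleGraph.Walk.length_cons, hw]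
      exact dep_par hk h0

lemma reachable_zero (hn : 0 < n) (m : Fin n) : (starG n k).Reachable m ⟨0, hn⟩ :=
  ⟨(exists_walk_zero hk hn m.val m rfl).choose⟩

lemma starG_connected (hn : 0 < n) : (starG n k).Connected := by
  rw [SimpleGraph.connected_iff]
  refine ⟨fun u v => (reachable_zero hk hn u).trans (reachable_zero hk hn v).symm,
    ⟨⟨0, hn⟩⟩⟩

lemma dist_le_deps (hn : 0 < n) (u v : Fin n) :
    (starG n k).dist u v ≤ dep k u.val + dep k v.val := by
  obtain ⟨w1, hw1⟩ := exists_walk_zero hk hn u.val u rfl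
  obtain ⟨w2, hw2⟩ := exists_walk_zero hk hn v.val v rfl
  have := SimpleGraph.dist_le (w1.append w2.reverse)
  rwa [SimpleGraph.Walk.length_append, SimpleGraph.Walk.length_reverse, hw1, hw2] at this

lemma D_le_walk (u : Fin n) {a b : Fin n} (w : (starG n k).Walk a b) :
    D k u.val b.val ≤ D k u.val a.val + w.length := by
  induction w with
  | nil => simp
  | @cons a c b hadj p ih =>
    have hstep : D k u.val c.val ≤ D k u.val a.val + 1 := by
      rw [starG_adj] at hadj
      rcases hadj.2 with ⟨h1, h2⟩ | ⟨h1, h2⟩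
      · rw [h2]; exact (D_step hk u.val a.val h1).2
      · calc D k u.val c.val ≤ D k u.val (par k c.val) + 1 := (D_step hk u.val c.val h1).1
          _ = D k u.val a.val + 1 := by rw [← h2]
    calc D k u.val b.val ≤ D k u.val c.val + p.length := ih
      _ ≤ D k u.val a.val + 1 + p.length := by omega
      _ = D k u.val a.val + (SimpleGraph.Walk.cons hadj p).length := by
          simp [SimpleGraph.Walk.length_cons]; omega

lemma D_le_dist (hn : 0 < n) (u v : Fin n) : D k u.val v.val ≤ (starG n k).dist u v := by
  obtain ⟨w, hw⟩ := ((starG_connected hk hn) u v).exists_walk_length_eq_dist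
  have := D_le_walk hk u w
  rwa [D_self, zero_add, hw] at this

lemma adj_lt_eq_par {x y : Fin n} (hadj : (starG n k).Adj x y) (hlt : y < x) :
    y.val = par k x.val := by
  rw [starG_adj] at hadj
  rcases hadj.2 with ⟨h1, h2⟩ | ⟨h1, h2⟩
  · exact h2
  · exfalso
    have := par_lt hk h1
    rw [← h2] at this
    exact absurd (lt_trans this hlt) (lt_irrefl _)

lemma starG_acyclic : (starG n k).IsAcyclic := by
  classical
  suffices H : ∀ (x : Fin n) (c : (starG n k).Walk x x), c.IsCycle →
      (∀ z ∈ c.support, z ≤ x) → False by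
    intro v c hc
    set s : Finset (Fin n) := c.support.toFinset with hs
    have hne : s.Nonempty := ⟨v, List.mem_toFinset.mpr c.start_mem_support⟩
    set x := s.max' hne with hxdef
    have hx : x ∈ c.support := List.mem_toFinset.mp (s.max'_mem hne)
    refine H x (c.rotate x hx) (hc.rotate hx) ?_
    intro z hz
    rcases List.mem_cons.mp ((c.rotate x hx).support_eq_cons ▸ hz) with rfl | hz'
    · exact le_refl _
    · have hperm := SimpleGraph.Walk.support_rotate c x hx
      have hz2 : z ∈ c.support.tail := hperm.mem_iff.mp hz'
      exact s.le_max' z (List.mem_toFinset.mpr (List.mem_of_mem_tail hz2))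
  intro x c hc hbd
  cases c with
  | nil => exact SimpleGraph.Walk.IsCycle.not_of_nil hc
  | @cons _ y _ hadj p =>
    rw [SimpleGraph.Walk.cons_isCycle_iff] at hc
    obtain ⟨hp, he⟩ := hc
    have hxy : x ≠ y := hadj.ne
    have hy_le : y < x := by
      rcases lt_or_eq_of_le (hbd y (by simp [SimpleGraph.Walk.support_cons,
        SimpleGraph.Walk.start_mem_support])) with h | h
      · exact h
      · exact absurd h.symm hxy
    cases hrev : p.reverse with
    | nil => exact hxy rfl
    | @cons _ z _ hadj2 q =>
      have hzsup : z ∈ p.support := by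
        have : z ∈ p.reverse.support := by
          rw [hrev, SimpleGraph.Walk.support_cons]
          exact List.mem_cons_of_mem _ q.start_mem_support
        rwa [SimpleGraph.Walk.support_reverse, List.mem_reverse] at this
      have hz_le : z < x := by
        have hzx : z ≠ x := by
          intro hzx
          subst hzx
          exact hadj2.ne rfl
        rcases lt_or_eq_of_le (hbd z (by
          rw [SimpleGraph.Walk.support_cons]
          exact List.mem_cons_of_mem _ hzsup)) with h | h
        · exact h
        · exact absurd h hzx
      have hez : s(x, z) ∈ p.edges := by
        have : s(x, z) ∈ p.reverse.edges := by
          rw [hrev, SimpleGraph.Walk.edges_cons]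
          exact List.mem_cons_self
        rwa [SimpleGraph.Walk.edges_reverse, List.mem_reverse] at this
      have hz_ne : z ≠ y := by
        intro hzy
        subst hzy
        exact he hez
      have h1 : y.val = par k x.val := adj_lt_eq_par hk hadj hy_le
      have h2 : z.val = par k x.val := adj_lt_eq_par hk hadj2 hz_le
      exact hz_ne (Fin.ext (h2.trans h1.symm))

omit hk

/-! ### Counting -/

open scoped Classical in
lemma nclose_eq {V : Type*} [Fintype V] (G : SimpleGraph V) (u v : V) :
    nclose G u v = (univ.filter fun w => G.dist u w < G.dist v w).card := by
  rw [nclose, Nat.card_coe_set_eq, Set.ncard_eq_toFinset_card', Set.toFinset_setOf]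

open scoped Classical in
lemma branch_card (hk : 1 ≤ k) (i : ℕ) :
    (univ.filter fun w : Fin n => w.val ≠ 0 ∧ br k w.val = i).card ≤ (n-2)/k + 1 := by
  refine le_trans (Finset.card_le_card_of_injOn
    (s := univ.filter fun w : Fin n => w.val ≠ 0 ∧ br k w.val = i)
    (t := Finset.range ((n-2)/k + 1))
    (fun w : Fin n => dep k w.val - 1)
    (fun w hw => ?_) (fun w hw w' hw' hd => ?_)) (by simp)
  · simp only [Finset.coe_filter, Set.mem_setOf_eq, mem_filter, mem_univ, true_and] at hw
    have hwn := w.isLt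
    have hle : (w.val - 1)/k ≤ (n-2)/k := Nat.div_le_div_right (by omega)
    show dep k w.val - 1 ∈ Finset.range ((n-2)/k+1)
    rw [Finset.mem_range, dep_lt' hw.1, Nat.add_sub_cancel]
    exact Nat.lt_succ_of_le hle
  · simp only [Finset.coe_filter, Set.mem_setOf_eq, mem_univ, true_and] at hw hw'
    apply Fin.ext
    have hd' : dep k w.val - 1 = dep k w'.val - 1 := hd
    rw [dep_lt' hw.1, dep_lt' hw'.1, Nat.add_sub_cancel, Nat.add_sub_cancel] at hd'
    apply eq_of_br_dep hw.1 hw'.1 (hw.2.trans hw'.2.symm)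
    rw [dep_lt' hw.1, dep_lt' hw'.1, hd']

open scoped Classical in
lemma depth_card (hk : 1 ≤ k) (d : ℕ) :
    (univ.filter fun w : Fin n => w.val ≠ 0 ∧ dep k w.val = d).card ≤ k := by
  refine le_trans (Finset.card_le_card_of_injOn
    (s := univ.filter fun w : Fin n => w.val ≠ 0 ∧ dep k w.val = d)
    (t := Finset.range k)
    (fun w : Fin n => br k w.val)
    (fun w _ => Finset.mem_range.mpr (br_lt hk)) (fun w hw w' hw' hb => ?_)) (by simp)
  · simp only [Finset.coe_filter, Set.mem_setOf_eq, mem_univ, true_and] at hw hw'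
    exact Fin.ext (eq_of_br_dep hw.1 hw'.1 hb (hw.2.trans hw'.2.symm))

open scoped Classical in
lemma nclose_bounds (hk : 1 ≤ k) (hn : 0 < n) {u v : Fin n}
    (hu : u.val ≠ 0) (hv : v.val ≠ 0) (hb : br k u.val ≠ br k v.val)
    (hd : dep k u.val < dep k v.val) :
    n ≤ nclose (starG n k) u v + 2 * ((n-2)/k + 1) ∧
      nclose (starG n k) v u ≤ 2 * ((n-2)/k + 1) := by
  set L := (n-2)/k + 1 with hL
  set G := starG n k with hG
  set S : Finset (Fin n) := univ.filter
    (fun w : Fin n => w.val = 0 ∨ (br k w.val ≠ br k u.val ∧ br k w.val ≠ br k v.val)) with hS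
  have hclose : ∀ w ∈ S, G.dist u w < G.dist v w := by
    intro w hw
    have hw' := (Finset.mem_filter.mp hw).2
    have hDvw : D k v.val w.val = dep k v.val + dep k w.val := by
      by_cases hw0 : w.val = 0
      · rw [hw0, D_zero]; simp [dep_zero]
      · rcases hw' with h0 | ⟨h1, h2⟩
        · exact absurd h0 hw0
        · refine D_of_not_sameBr ?_
          rintro (h | h | h)
          · exact hv h
          · exact hw0 h
          · exact h2 h.symm
    calc G.dist u w ≤ dep k u.val + dep k w.val := dist_le_deps hk hn u w
      _ < dep k v.val + dep k w.val := by omega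
      _ = D k v.val w.val := hDvw.symm
      _ ≤ G.dist v w := D_le_dist hk hn v w
  have hcompl : (univ \ S).card ≤ 2 * L := by
    have hsub : univ \ S ⊆
        (univ.filter fun w : Fin n => w.val ≠ 0 ∧ br k w.val = br k u.val) ∪
        (univ.filter fun w : Fin n => w.val ≠ 0 ∧ br k w.val = br k v.val) := by
      intro w hw
      rw [Finset.mem_sdiff, hS, Finset.mem_filter] at hw
      have hw' := hw.2
      push_neg at hw'
      obtain ⟨h0, h1⟩ := hw' (by simp)
      rw [Finset.mem_union, Finset.mem_filter, Finset.mem_filter]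
      by_cases hc : br k w.val = br k u.val
      · exact Or.inl ⟨Finset.mem_univ w, h0, hc⟩
      · exact Or.inr ⟨Finset.mem_univ w, h0, h1 hc⟩
    calc (univ \ S).card ≤ _ := Finset.card_le_card hsub
      _ ≤ _ + _ := Finset.card_union_le _ _
      _ ≤ L + L := Nat.add_le_add (branch_card hk _) (branch_card hk _)
      _ = 2 * L := by ring
  have hScard : n ≤ S.card + 2 * L := by
    have h1 : (univ \ S).card + S.card = (univ : Finset (Fin n)).card :=
      Finset.card_sdiff_add_card_eq_card (Finset.subset_univ S)
    have h2 : (univ : Finset (Fin n)).card = n := Finset.card_fin n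
    omega
  constructor
  · rw [nclose_eq]
    have : S ⊆ univ.filter fun w => G.dist u w < G.dist v w := by
      intro w hw
      exact Finset.mem_filter.mpr ⟨Finset.mem_univ w, hclose w hw⟩
    have := Finset.card_le_card this
    omega
  · rw [nclose_eq]
    have hsub2 : (univ.filter fun w => G.dist v w < G.dist u w) ⊆ univ \ S := by
      intro w hw
      rw [Finset.mem_filter] at hw
      rw [Finset.mem_sdiff]
      refine ⟨Finset.mem_univ w, fun hwS => ?_⟩
      exact absurd (hclose w hwS) (by omega)
    have := Finset.card_le_card hsub2
    omega

open scoped Classical in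
lemma term_lower (hk : 1 ≤ k) (hn : 0 < n) {u v : Fin n}
    (hu : u.val ≠ 0) (hv : v.val ≠ 0) (hb : br k u.val ≠ br k v.val)
    (hd : dep k u.val ≠ dep k v.val) :
    (n : ℤ) ≤ ((nclose (starG n k) u v : ℤ) - (nclose (starG n k) v u : ℤ)).natAbs
      + 4 * (((n-2)/k + 1 : ℕ) : ℤ) := by
  rcases Nat.lt_or_ge (dep k u.val) (dep k v.val) with h | h
  · obtain ⟨h1, h2⟩ := nclose_bounds hk hn hu hv hb h
    generalize hLL : (n-2)/k + 1 = L at h1 h2 ⊢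
    omega
  · have h' : dep k v.val < dep k u.val := lt_of_le_of_ne h (Ne.symm hd)
    obtain ⟨h1, h2⟩ := nclose_bounds hk hn hv hu (Ne.symm hb) h'
    generalize hLL : (n-2)/k + 1 = L at h1 h2 ⊢
    omega

/-! ### Summation -/

noncomputable def T {n : ℕ} (G : SimpleGraph (Fin n)) (u v : Fin n) : ℕ :=
  ((nclose G u v : ℤ) - (nclose G v u : ℤ)).natAbs

lemma T_comm {n : ℕ} (G : SimpleGraph (Fin n)) (u v : Fin n) : T G u v = T G v u := by
  unfold T; omega

lemma two_mul_uB {n : ℕ} (G : SimpleGraph (Fin n)) :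
    2 * uB G = ∑ u : Fin n, ∑ v ∈ univ \ {u}, T G u v := by
  have hsplit : ∀ u : Fin n, univ \ {u} = Finset.Iio u ∪ Finset.Ioi u := by
    intro u
    ext v
    simp only [Finset.mem_sdiff, Finset.mem_univ, true_and, Finset.mem_singleton,
      Finset.mem_union, Finset.mem_Iio, Finset.mem_Ioi]
    constructor
    · intro h; exact lt_or_gt_of_ne h
    · rintro (h | h) <;> intro he <;> subst he <;> exact lt_irrefl _ h
  have hdisj : ∀ u : Fin n, Disjoint (Finset.Iio u) (Finset.Ioi u) := by
    intro u
    exact Finset.disjoint_left.mpr (fun v hv hv' => by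
      simp at hv hv'; omega)
  have hIio : ∑ u : Fin n, ∑ v ∈ Finset.Iio u, T G u v
      = ∑ u : Fin n, ∑ v ∈ Finset.Ioi u, T G u v := by
    rw [Finset.sum_comm' (s' := fun v => Finset.Ioi v) (t' := univ)
      (by intro x y; simp [Finset.mem_Iio, Finset.mem_Ioi])]
    exact Finset.sum_congr rfl (fun u _ => Finset.sum_congr rfl (fun v _ => T_comm G v u))
  calc 2 * uB G = uB G + uB G := by ring
    _ = ∑ u : Fin n, ∑ v ∈ Finset.Iio u, T G u v
        + ∑ u : Fin n, ∑ v ∈ Finset.Ioi u, T G u v := by rw [hIio]; rfl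
    _ = ∑ u : Fin n, (∑ v ∈ Finset.Iio u, T G u v + ∑ v ∈ Finset.Ioi u, T G u v) := by
        rw [← Finset.sum_add_distrib]
    _ = ∑ u : Fin n, ∑ v ∈ univ \ {u}, T G u v := by
        refine Finset.sum_congr rfl (fun u _ => ?_)
        rw [hsplit u, Finset.sum_union (hdisj u)]

open scoped Classical in
lemma uB_int_lower {n k L : ℕ} (hk : 1 ≤ k) (hn : 0 < n)
    (hL : L = (n-2)/k + 1) (h4L : 4 * L ≤ n) :
    ((n:ℤ) - 1) * ((n:ℤ) - (1 + L + k)) * ((n:ℤ) - 4*L)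
      ≤ 2 * (uB (starG n k) : ℤ) := by
  set G := starG n k with hG
  set goodF : Fin n → Finset (Fin n) := fun u => univ.filter
    (fun v => u.val ≠ 0 ∧ v.val ≠ 0 ∧ br k u.val ≠ br k v.val ∧ dep k u.val ≠ dep k v.val)
    with hgoodF
  have hstep1 : ∀ u : Fin n, ((goodF u).card : ℤ) * ((n:ℤ) - 4*L)
      ≤ ∑ v ∈ univ \ {u}, (T G u v : ℤ) := by
    intro u
    have hsub : goodF u ⊆ univ \ {u} := by
      intro v hv
      rw [hgoodF, Finset.mem_filter] at hv
      rw [Finset.mem_sdiff, Finset.mem_singleton]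
      exact ⟨Finset.mem_univ v, fun h => hv.2.2.2.1 (by rw [h])⟩
    calc ((goodF u).card : ℤ) * ((n:ℤ) - 4*L) = ∑ _v ∈ goodF u, ((n:ℤ) - 4*L) := by
          rw [Finset.sum_const, nsmul_eq_mul]
      _ ≤ ∑ v ∈ goodF u, (T G u v : ℤ) := by
          refine Finset.sum_le_sum (fun v hv => ?_)
          rw [hgoodF, Finset.mem_filter] at hv
          obtain ⟨-, hu0, hv0, hb, hd⟩ := hv
          have := term_lower hk hn hu0 hv0 hb hd
          rw [hL]
          unfold G
          unfold T
          omega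
      _ ≤ ∑ v ∈ univ \ {u}, (T G u v : ℤ) :=
          Finset.sum_le_sum_of_subset_of_nonneg hsub (fun v _ _ => by positivity)
  have hstep2 : ∀ u : Fin n, u.val ≠ 0 → (n : ℤ) ≤ (goodF u).card + (1 + L + k) := by
    intro u hu
    have hcover : (univ : Finset (Fin n)) ⊆ goodF u
        ∪ (univ.filter fun v : Fin n => v.val = 0)
        ∪ (univ.filter fun v : Fin n => v.val ≠ 0 ∧ br k v.val = br k u.val)
        ∪ (univ.filter fun v : Fin n => v.val ≠ 0 ∧ dep k v.val = dep k u.val) := by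
      intro v _
      simp only [Finset.mem_union, hgoodF, Finset.mem_filter, Finset.mem_univ, true_and]
      by_cases h0 : v.val = 0
      · tauto
      · by_cases hb : br k v.val = br k u.val
        · tauto
        · by_cases hd : dep k v.val = dep k u.val
          · tauto
          · exact Or.inl (Or.inl (Or.inl ⟨hu, h0, fun h => hb h.symm, fun h => hd h.symm⟩))
    have hzero : (univ.filter fun v : Fin n => v.val = 0).card ≤ 1 := by
      refine Finset.card_le_one.mpr (fun a ha b hb => ?_)
      simp only [Finset.mem_filter] at ha hb
      exact Fin.ext (ha.2.trans hb.2.symm)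
    have h1 := Finset.card_le_card hcover
    have h2 := Finset.card_union_le (goodF u
        ∪ (univ.filter fun v : Fin n => v.val = 0)
        ∪ (univ.filter fun v : Fin n => v.val ≠ 0 ∧ br k v.val = br k u.val))
        (univ.filter fun v : Fin n => v.val ≠ 0 ∧ dep k v.val = dep k u.val)
    have h3 := Finset.card_union_le (goodF u
        ∪ (univ.filter fun v : Fin n => v.val = 0))
        (univ.filter fun v : Fin n => v.val ≠ 0 ∧ br k v.val = br k u.val)
    have h4 := Finset.card_union_le (goodF u) (univ.filter fun v : Fin n => v.val = 0)
    have h5 : (univ.filter fun v : Fin n => v.val ≠ 0 ∧ br k v.val = br k u.val).card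
        ≤ L := hL ▸ branch_card hk _
    have h6 : (univ.filter fun v : Fin n => v.val ≠ 0 ∧ dep k v.val = dep k u.val).card
        ≤ k := depth_card hk _
    have h7 : (univ : Finset (Fin n)).card = n := Finset.card_fin n
    have : n ≤ (goodF u).card + 1 + L + k := by omega
    push_cast
    omega
  have hnz : (univ.filter fun u : Fin n => u.val ≠ 0).card = n - 1 := by
    have : (univ.filter fun u : Fin n => ¬ u.val ≠ 0).card = 1 := by
      refine Finset.card_eq_one.mpr ⟨⟨0, hn⟩, ?_⟩
      ext v
      simp [Fin.ext_iff]
    have h := Finset.card_filter_add_card_filter_not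
      (s := (univ : Finset (Fin n))) (p := fun u : Fin n => u.val ≠ 0)
    rw [Finset.card_fin] at h
    omega
  have hM : ((n:ℤ) - 1) * ((n:ℤ) - (1 + L + k))
      ≤ ∑ u : Fin n, ((goodF u).card : ℤ) := by
    calc ((n:ℤ) - 1) * ((n:ℤ) - (1 + L + k))
        = ∑ _u ∈ univ.filter (fun u : Fin n => u.val ≠ 0), ((n:ℤ) - (1 + L + k)) := by
          rw [Finset.sum_const, nsmul_eq_mul, hnz,
            Nat.cast_sub (by omega : 1 ≤ n), Nat.cast_one]
      _ ≤ ∑ u ∈ univ.filter (fun u : Fin n => u.val ≠ 0), ((goodF u).card : ℤ) := by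
          refine Finset.sum_le_sum (fun u hu => ?_)
          have := hstep2 u (Finset.mem_filter.mp hu).2
          omega
      _ ≤ ∑ u : Fin n, ((goodF u).card : ℤ) :=
          Finset.sum_le_sum_of_subset_of_nonneg (Finset.filter_subset _ _)
            (fun u _ _ => by positivity)
  have htotal : (∑ u : Fin n, ((goodF u).card : ℤ)) * ((n:ℤ) - 4*L)
      ≤ 2 * (uB G : ℤ) := by
    have h1 : (2 * uB G : ℤ) = ∑ u : Fin n, ∑ v ∈ univ \ {u}, (T G u v : ℤ) := by
      rw_mod_cast [two_mul_uB G]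
    rw [h1, Finset.sum_mul]
    exact Finset.sum_le_sum (fun u _ => hstep1 u)
  have h4L' : (0:ℤ) ≤ (n:ℤ) - 4*L := by omega
  calc ((n:ℤ) - 1) * ((n:ℤ) - (1 + L + k)) * ((n:ℤ) - 4*L)
      ≤ (∑ u : Fin n, ((goodF u).card : ℤ)) * ((n:ℤ) - 4*L) :=
        mul_le_mul_of_nonneg_right hM h4L'
    _ ≤ 2 * (uB G : ℤ) := htotal

/-! ### Generic upper bounds -/

open scoped Classical in
lemma nclose_le {V : Type*} [Fintype V] (G : SimpleGraph V) (u v : V) :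
    nclose G u v ≤ Fintype.card V := by
  rw [nclose_eq]
  exact le_trans (Finset.card_le_univ _) (le_of_eq (Finset.card_univ))

lemma T_le {n : ℕ} (G : SimpleGraph (Fin n)) (u v : Fin n) : T G u v ≤ n := by
  have h1 := nclose_le G u v
  have h2 := nclose_le G v u
  rw [Fintype.card_fin] at h1 h2
  unfold T
  omega

lemma two_uB_le {n : ℕ} (G : SimpleGraph (Fin n)) : 2 * uB G ≤ n * ((n - 1) * n) := by
  rw [two_mul_uB G]
  calc ∑ u : Fin n, ∑ v ∈ univ \ {u}, T G u v
      ≤ ∑ _u : Fin n, ((n-1) * n) := by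
        refine Finset.sum_le_sum (fun u _ => ?_)
        calc ∑ v ∈ univ \ {u}, T G u v ≤ (univ \ {u}).card * n := by
              refine le_trans (Finset.sum_le_sum (fun v _ => T_le G u v)) ?_
              rw [Finset.sum_const, smul_eq_mul]
          _ = (n - 1) * n := by
              rw [Finset.card_sdiff_of_subset (Finset.subset_univ _), Finset.card_singleton,
                Finset.card_fin]
    _ = n * ((n-1) * n) := by rw [Finset.sum_const, Finset.card_fin, smul_eq_mul]

lemma uB_le_cube {n : ℕ} (G : SimpleGraph (Fin n)) : uB G ≤ n * n * n := by
  have h1 := two_uB_le G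
  have h2 : n * ((n-1) * n) ≤ 2 * (n * n * n) := by
    have : (n-1) ≤ n := Nat.sub_le n 1
    nlinarith
  exact Nat.le_of_mul_le_mul_left (by omega) (by norm_num : 0 < 2)

end UBproof

theorem max_uB_tree_asymptotics :
    Tendsto (fun n : ℕ =>
        ((sSup {m : ℕ | ∃ G : SimpleGraph (Fin n), G.Connected ∧ G.IsAcyclic ∧ uB G = m} : ℕ) : ℝ)
          / (n : ℝ) ^ 3)
      atTop (nhds (1 / 2)) := by
  classical
  set S : ℕ → Set ℕ := fun n =>
    {m : ℕ | ∃ G : SimpleGraph (Fin n), G.Connected ∧ G.IsAcyclic ∧ uB G = m} with hSdef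
  have hbdd : ∀ n : ℕ, BddAbove (S n) := by
    intro n
    refine ⟨n * n * n, ?_⟩
    rintro m ⟨G, -, -, rfl⟩
    exact UBproof.uB_le_cube G
  have hmem : ∀ n : ℕ, 0 < n → uB (UBproof.starG n (Nat.sqrt n)) ∈ S n := by
    intro n hn
    have hk : 1 ≤ Nat.sqrt n := Nat.sqrt_pos.mpr hn
    exact ⟨UBproof.starG n (Nat.sqrt n), UBproof.starG_connected hk hn,
      UBproof.starG_acyclic hk, rfl⟩
  -- sqrt tends to infinity
  have hsqrt : Tendsto (fun n : ℕ => Real.sqrt n) atTop atTop := by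
    rw [tendsto_atTop_atTop]
    intro b
    refine ⟨Nat.ceil (b*b), fun n hn => ?_⟩
    have h1 : b*b ≤ (n:ℝ) := le_trans (Nat.le_ceil _) (by exact_mod_cast hn)
    calc b ≤ |b| := le_abs_self b
      _ = Real.sqrt (b^2) := (Real.sqrt_sq_eq_abs b).symm
      _ ≤ Real.sqrt n := Real.sqrt_le_sqrt (by nlinarith)
  have hinv : Tendsto (fun n : ℕ => (Real.sqrt n)⁻¹) atTop (nhds 0) :=
    hsqrt.inv_tendsto_atTop
  have hone : Tendsto (fun n : ℕ => 1 - 1/(n:ℝ)) atTop (nhds (1 - 0)) :=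
    tendsto_const_nhds.sub tendsto_one_div_atTop_nhds_zero_nat
  -- squeeze
  refine tendsto_of_tendsto_of_tendsto_of_le_of_le'
    (g := fun n : ℕ => (1 - 1/(n:ℝ)) * (1 - 4*(Real.sqrt n)⁻¹) * (1 - 8*(Real.sqrt n)⁻¹) / 2)
    (h := fun n : ℕ => (1 - 1/(n:ℝ)) / 2) ?_ ?_ ?_ ?_
  · -- lower sequence tends to 1/2
    have h2 : Tendsto (fun n : ℕ => 1 - 4*(Real.sqrt n)⁻¹) atTop (nhds (1 - 4*0)) :=
      tendsto_const_nhds.sub (hinv.const_mul 4)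
    have h3 : Tendsto (fun n : ℕ => 1 - 8*(Real.sqrt n)⁻¹) atTop (nhds (1 - 8*0)) :=
      tendsto_const_nhds.sub (hinv.const_mul 8)
    have := ((hone.mul h2).mul h3).div_const 2
    norm_num at this ⊢
    exact this
  · -- upper sequence tends to 1/2
    have := hone.div_const 2
    norm_num at this ⊢
    exact this
  · -- eventual lower bound
    rw [eventually_atTop]
    refine ⟨64, fun n hn => ?_⟩
    have hn0 : 0 < n := by omega
    set k := Nat.sqrt n with hkdef
    have hk : 1 ≤ k := Nat.sqrt_pos.mpr hn0
    set L : ℕ := (n-2)/k + 1 with hLdef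
    set s : ℝ := Real.sqrt n with hsdef
    have hss : s * s = (n:ℝ) := Real.mul_self_sqrt (by positivity)
    have hs8 : 8 ≤ s := by
      rw [hsdef, show (8:ℝ) = Real.sqrt 64 by
        rw [show (64:ℝ) = 8^2 by norm_num, Real.sqrt_sq (by norm_num)]]
      exact Real.sqrt_le_sqrt (by exact_mod_cast hn)
    have hks : (k:ℝ) ≤ s := by
      rw [hsdef]
      calc (k:ℝ) = Real.sqrt ((k:ℝ)^2) := (Real.sqrt_sq (by positivity)).symm
        _ ≤ Real.sqrt n := Real.sqrt_le_sqrt (by exact_mod_cast Nat.sqrt_le' n)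
    have hsk : s ≤ (k:ℝ) + 1 := by
      rw [hsdef]
      calc Real.sqrt n ≤ Real.sqrt (((k:ℝ)+1)^2) := by
            refine Real.sqrt_le_sqrt ?_
            have := (Nat.lt_succ_sqrt' n).le
            push_cast [← hkdef] at this ⊢
            exact_mod_cast this
        _ = (k:ℝ) + 1 := Real.sqrt_sq (by positivity)
    have hk1 : (1:ℝ) ≤ (k:ℝ) := by exact_mod_cast hk
    have hLk : ((L:ℝ) - 1) * (k:ℝ) ≤ (n:ℝ) := by
      have h1 : (n-2)/k * k ≤ n := le_trans (Nat.div_mul_le_self _ _) (by omega)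
      have h2 : ((L:ℝ) - 1) = (((n-2)/k : ℕ) : ℝ) := by
        rw [hLdef]; push_cast; ring
      rw [h2]
      exact_mod_cast h1
    have hLs : (L:ℝ) ≤ 2*s := by nlinarith
    have h4L : 4 * L ≤ n := by
      have : (4 * L : ℝ) ≤ (n : ℝ) := by nlinarith
      exact_mod_cast this
    have hmain := UBproof.uB_int_lower hk hn0 hLdef h4L
    have hA : uB (UBproof.starG n k) ≤ sSup (S n) := le_csSup (hbdd n) (hmem n hn0)
    -- real versions
    have hmainR : ((n:ℝ) - 1) * ((n:ℝ) - (1 + L + k)) * ((n:ℝ) - 4*L)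
        ≤ 2 * (uB (UBproof.starG n k) : ℝ) := by exact_mod_cast hmain
    have hAR : (uB (UBproof.starG n k) : ℝ) ≤ ((sSup (S n) : ℕ) : ℝ) := by
      exact_mod_cast hA
    have e1 : (0:ℝ) ≤ (n:ℝ) - 1 := by
      have : (1:ℝ) ≤ n := by exact_mod_cast hn0
      linarith
    have e5 : (0:ℝ) ≤ (n:ℝ) - 4*s := by nlinarith
    have e4 : (0:ℝ) ≤ (n:ℝ) - 8*s := by nlinarith
    have e2 : (n:ℝ) - 4*s ≤ (n:ℝ) - (1 + L + k) := by nlinarith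
    have e3 : (n:ℝ) - 8*s ≤ (n:ℝ) - 4*L := by nlinarith
    have hprod : ((n:ℝ) - 1) * ((n:ℝ) - 4*s) * ((n:ℝ) - 8*s)
        ≤ 2 * ((sSup (S n) : ℕ) : ℝ) := by
      calc ((n:ℝ) - 1) * ((n:ℝ) - 4*s) * ((n:ℝ) - 8*s)
          ≤ ((n:ℝ) - 1) * ((n:ℝ) - (1 + L + k)) * ((n:ℝ) - 4*L) := by
            refine mul_le_mul (mul_le_mul le_rfl e2 e5 e1) e3 e4 ?_
            exact mul_nonneg e1 (le_trans e5 e2)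
        _ ≤ 2 * (uB (UBproof.starG n k) : ℝ) := hmainR
        _ ≤ 2 * ((sSup (S n) : ℕ) : ℝ) := by linarith
    -- rewrite the lower function
    have hn0R : (0:ℝ) < n := by exact_mod_cast hn0
    have hs0 : (0:ℝ) < s := by linarith
    have hgeq : (1 - 1/(n:ℝ)) * (1 - 4*(Real.sqrt n)⁻¹) * (1 - 8*(Real.sqrt n)⁻¹) / 2
        = ((n:ℝ) - 1) * ((n:ℝ) - 4*s) * ((n:ℝ) - 8*s) / (2*(n:ℝ)^3) := by
      rw [← hsdef, ← hss]
      field_simp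
    show (1 - 1/(n:ℝ)) * (1 - 4*(Real.sqrt n)⁻¹) * (1 - 8*(Real.sqrt n)⁻¹) / 2
        ≤ ((sSup (S n) : ℕ) : ℝ) / (n:ℝ)^3
    rw [hgeq]
    rw [div_le_div_iff₀ (by positivity) (by positivity)]
    have hstep := mul_le_mul_of_nonneg_right hprod (by positivity : (0:ℝ) ≤ (n:ℝ)^3)
    linear_combination hstep
  · -- eventual upper bound
    rw [eventually_atTop]
    refine ⟨1, fun n hn => ?_⟩
    have hn0 : 0 < n := hn
    obtain ⟨G₀, -, -, hG₀⟩ := Nat.sSup_mem ⟨_, hmem n hn0⟩ (hbdd n)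
    have h2u := UBproof.two_uB_le G₀
    have h2uR : 2 * ((sSup (S n) : ℕ) : ℝ) ≤ (n:ℝ) * (((n:ℝ) - 1) * n) := by
      rw [← hG₀]
      have : ((n - 1 : ℕ) : ℝ) = (n:ℝ) - 1 := by
        push_cast [Nat.cast_sub (by omega : 1 ≤ n)]; ring
      rw [← this]
      exact_mod_cast h2u
    have hn0R : (0:ℝ) < n := by exact_mod_cast hn0
    have hfi : (1 - 1/(n:ℝ)) / 2 = ((n:ℝ) - 1) * (n:ℝ)^2 / (2 * (n:ℝ)^3) := by
      field_simp
    show ((sSup (S n) : ℕ) : ℝ) / (n:ℝ)^3 ≤ (1 - 1/(n:ℝ)) / 2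
    rw [hfi, div_le_div_iff₀ (by positivity) (by positivity)]
    have hstep := mul_le_mul_of_nonneg_right h2uR (by positivity : (0:ℝ) ≤ (n:ℝ)^3)
    linear_combination hstep
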